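/- Let V ∈ ℝ^{d×n} satisfy V V^T = I_d, let T ⊆ [n] with eigenvalues μ_1 ≥ μ_2 ≥ ... ≥ μ_d of V_T V_T^T, and let E_b ∈ ℝ^{d×p} have as columns orthonormal eigenvectors of V_T V_T^T corresponding to the p largest eigenvalues. Let D ⊆ T with |D| = p be such that V_D has full column rank and E_b^T V_D ∈ ℝ^{p×p} is invertible, and let P_D := V_D (V_D^T V_D)^{-1} V_D^T. Then tr[(I_d − P_D) V_T V_T^T] ≤ (1 + ‖(E_b^T V_D)^{-1}‖_op²) · Σ_{i=p+1}^d μ_i. -/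
import Mathlib


open Matrix BigOperators

/-- The submatrix of `V` consisting of the columns indexed by `S`. -/
def cols {d n : ℕ} (V : Matrix (Fin d) (Fin n) ℝ) (S : Finset (Fin n)) :
    Matrix (Fin d) {j // j ∈ S} ℝ :=
  Matrix.of fun i j => V i j

/-- The square of the operator (spectral) norm: `‖M‖_op² = max_{‖x‖=1} ‖Mx‖²`. -/
noncomputable def opNormSq {m k : Type*} [Fintype m] [Fintype k]
    (M : Matrix m k ℝ) : ℝ :=
  ⨆ x : {x : k → ℝ // ∑ j, x j ^ 2 = 1}, ∑ i, (M.mulVec x.1 i) ^ 2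

/-- The orthogonal projection onto the column span of `V_D`. -/
noncomputable def projCols {d n : ℕ} (V : Matrix (Fin d) (Fin n) ℝ) (D : Finset (Fin n)) :
    Matrix (Fin d) (Fin d) ℝ :=
  cols V D * ((cols V D)ᵀ * cols V D)⁻¹ * (cols V D)ᵀ

section auxNorm
variable {m k : Type*} [Fintype m] [Fintype k]

lemma opNormSq_bdd (M : Matrix m k ℝ) :
    BddAbove (Set.range fun x : {x : k → ℝ // ∑ j, x j ^ 2 = 1} =>
      ∑ i, (M.mulVec x.1 i) ^ 2) := by
  refine ⟨∑ i, ∑ j, M i j ^ 2, ?_⟩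
  rintro r ⟨x, rfl⟩
  calc ∑ i, (M.mulVec x.1 i) ^ 2
      ≤ ∑ i, (∑ j, M i j ^ 2) * ∑ j, (x.1 j) ^ 2 := by
        refine Finset.sum_le_sum fun i _ => ?_
        simpa [Matrix.mulVec, dotProduct] using
          Finset.sum_mul_sq_le_sq_mul_sq Finset.univ (fun j => M i j) x.1
    _ = ∑ i, ∑ j, M i j ^ 2 := by
        rw [x.2]; simp

lemma opNormSq_nonneg (M : Matrix m k ℝ) : 0 ≤ opNormSq M := by
  rcases isEmpty_or_nonempty {x : k → ℝ // ∑ j, x j ^ 2 = 1} with h | h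
  · rw [opNormSq, Real.iSup_of_isEmpty]
  · obtain ⟨x⟩ := h
    refine le_trans ?_ (le_ciSup (opNormSq_bdd M) x)
    positivity

lemma opNormSq_mulVec_le (M : Matrix m k ℝ) (y : k → ℝ) :
    ∑ i, (M.mulVec y i) ^ 2 ≤ opNormSq M * ∑ j, y j ^ 2 := by
  rcases eq_or_ne (∑ j, y j ^ 2) 0 with hc | hc
  · have hy : y = 0 := by
      funext j
      have := (Finset.sum_eq_zero_iff_of_nonneg
        (fun j _ => sq_nonneg (y j))).mp hc j (Finset.mem_univ j)
      exact pow_eq_zero_iff (two_ne_zero) |>.mp this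
    simp [hy, hc, Matrix.mulVec_zero]
  · have hcpos : 0 < ∑ j, y j ^ 2 := lt_of_le_of_ne (by positivity) (Ne.symm hc)
    set c := ∑ j, y j ^ 2 with hcdef
    have hs : Real.sqrt c ≠ 0 := by positivity
    have hx : ∑ j, ((Real.sqrt c)⁻¹ • y) j ^ 2 = 1 := by
      simp only [Pi.smul_apply, smul_eq_mul, mul_pow, ← Finset.mul_sum]
      rw [← hcdef, inv_pow, Real.sq_sqrt hcpos.le]
      exact inv_mul_cancel₀ hc
    have hle := le_ciSup (opNormSq_bdd M) (⟨_, hx⟩ :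
      {x : k → ℝ // ∑ j, x j ^ 2 = 1})
    have hmv : M.mulVec ((Real.sqrt c)⁻¹ • y) = (Real.sqrt c)⁻¹ • M.mulVec y := by
      rw [Matrix.mulVec_smul]
    rw [hmv] at hle
    have hle2 : c⁻¹ * ∑ i, (M.mulVec y i) ^ 2 ≤ opNormSq M := by
      calc c⁻¹ * ∑ i, (M.mulVec y i) ^ 2
          = ∑ i, ((Real.sqrt c)⁻¹ • M.mulVec y) i ^ 2 := by
            simp only [Pi.smul_apply, smul_eq_mul, mul_pow, ← Finset.mul_sum,
              inv_pow, Real.sq_sqrt hcpos.le]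
        _ ≤ opNormSq M := hle
    calc ∑ i, (M.mulVec y i) ^ 2 = c * (c⁻¹ * ∑ i, (M.mulVec y i) ^ 2) := by
          field_simp
      _ ≤ c * opNormSq M := mul_le_mul_of_nonneg_left hle2 hcpos.le
      _ = opNormSq M * c := mul_comm _ _

lemma opNormSq_transpose_le (M : Matrix k k ℝ) : opNormSq Mᵀ ≤ opNormSq M := by
  rcases isEmpty_or_nonempty {x : k → ℝ // ∑ j, x j ^ 2 = 1} with h | h
  · rw [opNormSq, Real.iSup_of_isEmpty]
    exact opNormSq_nonneg M
  · rw [opNormSq]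
    refine ciSup_le fun x => ?_
    set v := Mᵀ.mulVec x.1 with hv
    set a := ∑ j, v j ^ 2 with ha
    have ha0 : 0 ≤ a := by positivity
    have hav : a = x.1 ⬝ᵥ M.mulVec v := by
      calc a = v ⬝ᵥ v := by simp [dotProduct, ha, sq]
        _ = (x.1 ᵥ* M) ⬝ᵥ v := by rw [← Matrix.mulVec_transpose, ← hv]
        _ = x.1 ⬝ᵥ M.mulVec v := (Matrix.dotProduct_mulVec _ _ _).symm
    have hCS : a ^ 2 ≤ ∑ i, (M.mulVec v i) ^ 2 := by
      calc a ^ 2 = (∑ i, x.1 i * M.mulVec v i) ^ 2 := by rw [hav]; rfl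
        _ ≤ (∑ i, x.1 i ^ 2) * ∑ i, (M.mulVec v i) ^ 2 :=
            Finset.sum_mul_sq_le_sq_mul_sq Finset.univ _ _
        _ = ∑ i, (M.mulVec v i) ^ 2 := by rw [x.2, one_mul]
    have hbound : a ^ 2 ≤ opNormSq M * a := le_trans hCS (opNormSq_mulVec_le M v)
    rcases eq_or_lt_of_le ha0 with h0 | hpos
    · rw [← h0]; exact opNormSq_nonneg M
    · nlinarith [hbound]

lemma frob_mul_le {p : ℕ} (X : Matrix m (Fin p) ℝ) (C : Matrix (Fin p) (Fin p) ℝ) :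
    ∑ i, ∑ j, ((X * C) i j) ^ 2 ≤ opNormSq Cᵀ * ∑ i, ∑ j, (X i j) ^ 2 := by
  rw [Finset.mul_sum]
  refine Finset.sum_le_sum fun i _ => ?_
  have hrow : ∀ j, (X * C) i j = Cᵀ.mulVec (fun k => X i k) j := by
    intro j
    simp only [Matrix.mul_apply, Matrix.mulVec, dotProduct, Matrix.transpose_apply]
    exact Finset.sum_congr rfl fun k _ => mul_comm _ _
  calc ∑ j, ((X * C) i j) ^ 2 = ∑ j, (Cᵀ.mulVec (fun k => X i k) j) ^ 2 := by
        exact Finset.sum_congr rfl fun j _ => by rw [hrow]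
    _ ≤ opNormSq Cᵀ * ∑ k, (X i k) ^ 2 := opNormSq_mulVec_le Cᵀ _

end auxNorm

section auxProj
variable {ι : Type*} [Fintype ι]

lemma proj_quad_eq (S : Matrix ι ι ℝ) (hsym : Sᵀ = S) (hidem : S * S = S)
    (v : ι → ℝ) : ∑ i, (S.mulVec v i) ^ 2 = v ⬝ᵥ S.mulVec v := by
  calc ∑ i, (S.mulVec v i) ^ 2 = S.mulVec v ⬝ᵥ S.mulVec v := by
        simp [dotProduct, sq]
    _ = (S.mulVec v ᵥ* S) ⬝ᵥ v := Matrix.dotProduct_mulVec _ _ _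
    _ = (Sᵀ.mulVec (S.mulVec v)) ⬝ᵥ v := by rw [Matrix.mulVec_transpose]
    _ = ((Sᵀ * S).mulVec v) ⬝ᵥ v := by rw [Matrix.mulVec_mulVec]
    _ = (S.mulVec v) ⬝ᵥ v := by rw [hsym, hidem]
    _ = v ⬝ᵥ S.mulVec v := dotProduct_comm _ _

lemma proj_quad_nonneg (S : Matrix ι ι ℝ) (hsym : Sᵀ = S) (hidem : S * S = S)
    (v : ι → ℝ) : 0 ≤ v ⬝ᵥ S.mulVec v := by
  rw [← proj_quad_eq S hsym hidem]; positivity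

lemma proj_contract [DecidableEq ι] (S : Matrix ι ι ℝ) (hsym : Sᵀ = S)
    (hidem : S * S = S) (v : ι → ℝ) :
    ∑ i, (S.mulVec v i) ^ 2 ≤ ∑ i, v i ^ 2 := by
  have hsym' : (1 - S)ᵀ = 1 - S := by rw [Matrix.transpose_sub, Matrix.transpose_one, hsym]
  have hidem' : (1 - S) * (1 - S) = 1 - S := by
    simp only [Matrix.sub_mul, Matrix.mul_sub, Matrix.one_mul, Matrix.mul_one, hidem]
    abel
  have h1 := proj_quad_nonneg _ hsym' hidem' v
  have h2 : v ⬝ᵥ (1 - S).mulVec v = ∑ i, v i ^ 2 - v ⬝ᵥ S.mulVec v := by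
    rw [Matrix.sub_mulVec, dotProduct_sub, Matrix.one_mulVec]
    simp [dotProduct, sq]
  rw [proj_quad_eq S hsym hidem]
  rw [h2] at h1; linarith

lemma trace_proj_psd_nonneg (R S : Matrix ι ι ℝ) (hsym : Rᵀ = R)
    (hidem : R * R = R) (hS : ∀ v, 0 ≤ v ⬝ᵥ S.mulVec v) :
    0 ≤ Matrix.trace (R * S) := by
  have key : Matrix.trace (R * S) = Matrix.trace (R * (S * R)) := by
    rw [Matrix.trace_mul_comm R (S * R), Matrix.mul_assoc S R R, hidem,
      Matrix.trace_mul_comm S R]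
  rw [key, Matrix.trace]
  refine Finset.sum_nonneg fun i _ => ?_
  have : (R * (S * R)).diag i = (fun j => R i j) ⬝ᵥ S.mulVec (fun j => R i j) := by
    simp only [Matrix.diag, Matrix.mul_apply, dotProduct, Matrix.mulVec,
      Finset.mul_sum]
    have hRs : ∀ a b, R a b = R b a := fun a b => by
      nth_rewrite 1 [← hsym]; rw [Matrix.transpose_apply]
    congr 1; funext j
    exact Finset.sum_congr rfl fun k _ => by rw [hRs k i]
  rw [this]
  exact hS _

end auxProj

lemma quad_cols {d n : ℕ} (V : Matrix (Fin d) (Fin n) ℝ) (S : Finset (Fin n))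
    (v : Fin d → ℝ) :
    v ⬝ᵥ (cols V S * (cols V S)ᵀ).mulVec v = ∑ j ∈ S, ((Vᵀ).mulVec v j) ^ 2 := by
  have h1 : v ⬝ᵥ (cols V S * (cols V S)ᵀ).mulVec v
      = ((cols V S)ᵀ.mulVec v) ⬝ᵥ ((cols V S)ᵀ.mulVec v) := by
    rw [← Matrix.mulVec_mulVec, Matrix.dotProduct_mulVec, ← Matrix.mulVec_transpose]
  rw [h1, dotProduct]
  have h2 : ∀ j : {j // j ∈ S}, (cols V S)ᵀ.mulVec v j = (Vᵀ).mulVec v j.1 := by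
    intro j; simp [Matrix.mulVec, dotProduct, cols, Matrix.transpose_apply]
  calc ∑ j : {j // j ∈ S}, (cols V S)ᵀ.mulVec v j * (cols V S)ᵀ.mulVec v j
      = ∑ j : {j // j ∈ S}, ((Vᵀ).mulVec v j.1) ^ 2 := by
        refine Finset.sum_congr rfl fun j _ => ?_; rw [h2]; ring
    _ = ∑ j ∈ S, ((Vᵀ).mulVec v j) ^ 2 := by
        rw [← Finset.sum_coe_sort S (fun j => ((Vᵀ).mulVec v j) ^ 2)]

lemma quad_full {d n : ℕ} (V : Matrix (Fin d) (Fin n) ℝ) (v : Fin d → ℝ) :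
    v ⬝ᵥ (V * Vᵀ).mulVec v = ∑ j, ((Vᵀ).mulVec v j) ^ 2 := by
  have h1 : v ⬝ᵥ (V * Vᵀ).mulVec v = ((Vᵀ).mulVec v) ⬝ᵥ ((Vᵀ).mulVec v) := by
    rw [← Matrix.mulVec_mulVec, Matrix.dotProduct_mulVec, ← Matrix.mulVec_transpose]
  rw [h1]
  simp [dotProduct, sq]

lemma quad_entry {d p : ℕ} (A : Matrix (Fin d) (Fin d) ℝ) (Eb : Matrix (Fin d) (Fin p) ℝ)
    (j : Fin p) :
    ((Ebᵀ * A) * Eb) j j = (fun k => Eb k j) ⬝ᵥ A.mulVec (fun k => Eb k j) := by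
  simp only [Matrix.mul_apply, dotProduct, Matrix.mulVec, Matrix.transpose_apply,
    Finset.sum_mul, Finset.mul_sum]
  rw [Finset.sum_comm]
  refine Finset.sum_congr rfl fun k _ => Finset.sum_congr rfl fun l _ => by ring
/-- Projection bound: if `V Vᵀ = I_d`, `μ₁ ≥ ... ≥ μ_d` are the eigenvalues of
`V_T V_Tᵀ`, `E_b` is the matrix of orthonormal eigenvectors for the `p` largest
eigenvalues, and `D ⊆ T` with `|D| = p` is such that `V_D` has full column rank and
`E_bᵀ V_D` is invertible, then
`tr[(I − P_D) V_T V_Tᵀ] ≤ (1 + ‖(E_bᵀ V_D)⁻¹‖_op²)·Σ_{i>p} μ_i`. -/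
theorem proj_bound_sigma {d n : ℕ} (V : Matrix (Fin d) (Fin n) ℝ)
    (hV : V * Vᵀ = 1) (T : Finset (Fin n)) (p : ℕ) (hpd : p ≤ d)
    (μ : Fin d → ℝ) (hμmono : Antitone μ)
    (E : Matrix (Fin d) (Fin d) ℝ) (hEorth : Eᵀ * E = 1)
    (hdecomp : cols V T * (cols V T)ᵀ = E * Matrix.diagonal μ * Eᵀ)
    (Eb : Matrix (Fin d) (Fin p) ℝ)
    (hEb : ∀ i (j : Fin p), Eb i j = E i (Fin.castLE hpd j))
    (D : Finset (Fin n)) (hDT : D ⊆ T) (hDcard : D.card = p)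
    (hrank : (cols V D).rank = p)
    (B : Matrix (Fin p) (Fin p) ℝ)
    (hB : ∀ (i : Fin p) (j : Fin p),
      B i j = (Ebᵀ * cols V D) i ((D.equivFin.trans (finCongr hDcard)).symm j))
    (hBinv : IsUnit B.det) :
    Matrix.trace ((1 - projCols V D) * (cols V T * (cols V T)ᵀ))
      ≤ (1 + opNormSq B⁻¹) *
        ∑ i ∈ Finset.univ.filter (fun i : Fin d => p ≤ (i : ℕ)), μ i := by
  classical
  set W := cols V T with hW
  set M := cols V D with hM
  set A := W * Wᵀ with hA
  set e : {j // j ∈ D} ≃ Fin p := D.equivFin.trans (finCongr hDcard) with he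
  set N : Matrix (Fin d) (Fin p) ℝ := M.submatrix id e.symm with hN
  -- B = Ebᵀ * N
  have hBN : B = Ebᵀ * N := by
    ext i j
    rw [hB i j]
    simp [Matrix.mul_apply, hN, Matrix.submatrix_apply]
  -- injectivity facts
  have hBinj : Function.Injective B.mulVec :=
    Matrix.mulVec_injective_iff_isUnit.mpr ((Matrix.isUnit_iff_isUnit_det B).mpr hBinv)
  have hNinj : ∀ x : Fin p → ℝ, N.mulVec x = 0 → x = 0 := by
    intro x hx
    have hBx : B.mulVec x = 0 := by
      rw [hBN, ← Matrix.mulVec_mulVec, hx, Matrix.mulVec_zero]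
    have := hBinj (a₁ := x) (a₂ := 0) (by rw [hBx, Matrix.mulVec_zero])
    exact this
  have hNTN : IsUnit (Nᵀ * N).det := by
    rw [← Matrix.isUnit_iff_isUnit_det, ← Matrix.mulVec_injective_iff_isUnit]
    intro x y hxy
    have h0 : (Nᵀ * N).mulVec (x - y) = 0 := by
      rw [Matrix.mulVec_sub, hxy, sub_self]
    have hquad : (N.mulVec (x - y)) ⬝ᵥ (N.mulVec (x - y)) = 0 := by
      have h2 : (x - y) ⬝ᵥ (Nᵀ * N).mulVec (x - y)
          = (N.mulVec (x - y)) ⬝ᵥ (N.mulVec (x - y)) := by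
        rw [← Matrix.mulVec_mulVec, Matrix.dotProduct_mulVec, Matrix.vecMul_transpose]
      rw [← h2, h0, dotProduct_zero]
    have hNz : N.mulVec (x - y) = 0 := by
      funext i
      have hsum : ∑ i, (N.mulVec (x - y) i) ^ 2 = 0 := by
        rw [← hquad]; simp [dotProduct, sq]
      have := (Finset.sum_eq_zero_iff_of_nonneg
        (fun i _ => sq_nonneg (N.mulVec (x - y) i))).mp hsum i (Finset.mem_univ i)
      simpa using pow_eq_zero_iff two_ne_zero |>.mp this
    have := hNinj _ hNz
    exact sub_eq_zero.mp this
  -- Mᵀ M invertible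
  have hsub : Nᵀ * N = (Mᵀ * M).submatrix e.symm e.symm := by
    ext i j
    simp [Matrix.mul_apply, hN, Matrix.submatrix_apply]
  have hMTM : IsUnit (Mᵀ * M).det := by
    rwa [← Matrix.det_submatrix_equiv_self e.symm (Mᵀ * M), ← hsub]
  -- projection facts
  set P := projCols V D with hPdef
  have hPeq : P = M * (Mᵀ * M)⁻¹ * Mᵀ := rfl
  have hsymMM : (Mᵀ * M)ᵀ = Mᵀ * M := by
    rw [Matrix.transpose_mul, Matrix.transpose_transpose]
  have hPM : P * M = M := by
    rw [hPeq, Matrix.mul_assoc (M * (Mᵀ * M)⁻¹) Mᵀ M, Matrix.mul_assoc M (Mᵀ * M)⁻¹ _,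
      Matrix.nonsing_inv_mul _ hMTM, Matrix.mul_one]
  have hPsym : Pᵀ = P := by
    rw [hPeq, Matrix.transpose_mul, Matrix.transpose_mul, Matrix.transpose_transpose,
      Matrix.transpose_nonsing_inv, hsymMM, Matrix.mul_assoc]
  have hPP : P * P = P := by
    have h1 : P = M * ((Mᵀ * M)⁻¹ * Mᵀ) := by rw [hPeq, Matrix.mul_assoc]
    have hXM : ((Mᵀ * M)⁻¹ * Mᵀ) * M = 1 := by
      rw [Matrix.mul_assoc, Matrix.nonsing_inv_mul _ hMTM]
    rw [h1, Matrix.mul_assoc, ← Matrix.mul_assoc ((Mᵀ * M)⁻¹ * Mᵀ) M _, hXM,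
      Matrix.one_mul]
  set Q : Matrix (Fin d) (Fin d) ℝ := 1 - P with hQ
  have hQsym : Qᵀ = Q := by
    rw [hQ, Matrix.transpose_sub, Matrix.transpose_one, hPsym]
  have hQQ : Q * Q = Q := by
    rw [hQ]
    simp only [Matrix.sub_mul, Matrix.mul_sub, Matrix.one_mul, Matrix.mul_one, hPP]
    abel
  have hPN : P * N = N := by
    ext i j
    have h := congrFun (congrFun hPM i) (e.symm j)
    simp only [Matrix.mul_apply, hN, Matrix.submatrix_apply, id] at h ⊢
    exact h
  have hQN : Q * N = 0 := by
    rw [hQ, Matrix.sub_mul, Matrix.one_mul, hPN, sub_self]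
  -- Eb facts
  have hEcol : ∀ a b : Fin d, (∑ i, E i a * E i b) = if a = b then 1 else 0 := by
    intro a b
    have h := congrFun (congrFun hEorth a) b
    simpa [Matrix.mul_apply, Matrix.one_apply] using h
  have hEbO : Ebᵀ * Eb = 1 := by
    ext j k
    simp only [Matrix.mul_apply, Matrix.transpose_apply, Matrix.one_apply, hEb]
    rw [hEcol]
    simp [Fin.castLE_inj]
  set R : Matrix (Fin d) (Fin d) ℝ := 1 - Eb * Ebᵀ with hR
  have hRsym : Rᵀ = R := by
    rw [hR, Matrix.transpose_sub, Matrix.transpose_one, Matrix.transpose_mul,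
      Matrix.transpose_transpose]
  have hRR : R * R = R := by
    have hEE : (Eb * Ebᵀ) * (Eb * Ebᵀ) = Eb * Ebᵀ := by
      rw [Matrix.mul_assoc, ← Matrix.mul_assoc Ebᵀ Eb Ebᵀ, hEbO, Matrix.one_mul]
    rw [hR]
    simp only [Matrix.sub_mul, Matrix.mul_sub, Matrix.one_mul, Matrix.mul_one, hEE]
    abel
  -- diagonalization facts
  have hAE : Eᵀ * A * E = Matrix.diagonal μ := by
    rw [hdecomp]
    calc Eᵀ * (E * Matrix.diagonal μ * Eᵀ) * E
        = (Eᵀ * E) * (Matrix.diagonal μ * (Eᵀ * E)) := by simp only [Matrix.mul_assoc]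
      _ = Matrix.diagonal μ := by rw [hEorth, Matrix.mul_one, Matrix.one_mul]
  have hdiagA : ∀ i : Fin d, (fun k => E k i) ⬝ᵥ A.mulVec (fun k => E k i) = μ i := by
    intro i
    have h := congrFun (congrFun hAE i) i
    simp only [Matrix.mul_apply, Matrix.transpose_apply, Matrix.diagonal_apply_eq] at h
    rw [← h]
    simp only [dotProduct, Matrix.mulVec, Finset.sum_mul, Finset.mul_sum]
    rw [Finset.sum_comm]
    exact Finset.sum_congr rfl fun l _ => Finset.sum_congr rfl fun k _ => by ring
  
  -- quadratic form facts
  have hAquad : ∀ v : Fin d → ℝ, v ⬝ᵥ A.mulVec v = ∑ j ∈ T, ((Vᵀ).mulVec v j) ^ 2 := by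
    intro v; rw [hA, hW]; exact quad_cols V T v
  have hNNT : N * Nᵀ = M * Mᵀ := by
    ext i k
    simp only [Matrix.mul_apply, hN, Matrix.submatrix_apply, Matrix.transpose_apply, id]
    exact Equiv.sum_comp e.symm (fun j => M i j * M k j)
  have hMquad : ∀ v : Fin d → ℝ,
      v ⬝ᵥ (M * Mᵀ).mulVec v = ∑ j ∈ D, ((Vᵀ).mulVec v j) ^ 2 := by
    intro v; rw [hM]; exact quad_cols V D v
  have hSpos : ∀ v : Fin d → ℝ, 0 ≤ v ⬝ᵥ (A - N * Nᵀ).mulVec v := by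
    intro v
    have hrw : A - N * Nᵀ = A - M * Mᵀ := by rw [hNNT]
    rw [hrw, Matrix.sub_mulVec, dotProduct_sub, hAquad, hMquad]
    exact sub_nonneg.mpr (Finset.sum_le_sum_of_subset_of_nonneg hDT
      (fun j _ _ => sq_nonneg _))
  have honequad : ∀ v : Fin d → ℝ, v ⬝ᵥ A.mulVec v ≤ ∑ i, v i ^ 2 := by
    intro v
    rw [hAquad]
    calc ∑ j ∈ T, ((Vᵀ).mulVec v j) ^ 2 ≤ ∑ j, ((Vᵀ).mulVec v j) ^ 2 :=
        Finset.sum_le_sum_of_subset_of_nonneg (Finset.subset_univ T)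
          (fun _ _ _ => sq_nonneg _)
      _ = v ⬝ᵥ (V * Vᵀ).mulVec v := (quad_full V v).symm
      _ = ∑ i, v i ^ 2 := by rw [hV, Matrix.one_mulVec]; simp [dotProduct, sq]
  have hE_unit : ∀ i : Fin d, ∑ k, (E k i) ^ 2 = 1 := by
    intro i
    have h := hEcol i i
    simpa [sq] using h
  have hmu_nonneg : ∀ i, 0 ≤ μ i := by
    intro i
    rw [← hdiagA i, hAquad]
    exact Finset.sum_nonneg fun j _ => sq_nonneg _
  have hmu_le_one : ∀ i, μ i ≤ 1 := by
    intro i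
    rw [← hdiagA i]
    exact le_of_le_of_eq (honequad _) (hE_unit i)
  -- trace as weighted sum
  set c : Fin d → ℝ := fun i => (fun k => E k i) ⬝ᵥ Q.mulVec (fun k => E k i) with hc
  have hTrace : Matrix.trace (Q * A) = ∑ i, μ i * c i := by
    have h1 : Q * A = ((Q * E) * Matrix.diagonal μ) * Eᵀ := by
      rw [hdecomp]; simp only [Matrix.mul_assoc]
    rw [h1, Matrix.trace_mul_comm, ← Matrix.mul_assoc, ← Matrix.mul_assoc, Matrix.trace]
    refine Finset.sum_congr rfl fun i _ => ?_
    rw [Matrix.diag_apply, Matrix.mul_diagonal, quad_entry Q E i, mul_comm]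
  have hc_le_one : ∀ i, c i ≤ 1 := by
    intro i
    calc c i = ∑ k, (Q.mulVec (fun k => E k i) k) ^ 2 :=
        (proj_quad_eq Q hQsym hQQ _).symm
      _ ≤ ∑ k, (E k i) ^ 2 := proj_contract Q hQsym hQQ _
      _ = 1 := hE_unit i
  -- index reindexing
  have hset : Finset.univ.filter (fun i : Fin d => ¬ p ≤ (i : ℕ))
      = Finset.univ.map (Fin.castLEEmb hpd) := by
    ext i
    simp only [Finset.mem_filter, Finset.mem_map, Finset.mem_univ, true_and, not_le]
    constructor
    · intro hi
      exact ⟨⟨(i : ℕ), hi⟩, by simp [Fin.castLEEmb, Fin.castLE, Fin.ext_iff]⟩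
    · rintro ⟨j, rfl⟩
      simpa [Fin.castLEEmb, Fin.castLE] using j.2
  have hsplit := Finset.sum_filter_add_sum_filter_not Finset.univ
      (fun i : Fin d => p ≤ (i : ℕ)) (fun i => μ i * c i)
  have hpart2 : ∑ i ∈ Finset.univ.filter (fun i : Fin d => p ≤ (i : ℕ)), μ i * c i
      ≤ ∑ i ∈ Finset.univ.filter (fun i : Fin d => p ≤ (i : ℕ)), μ i :=
    Finset.sum_le_sum fun i _ => mul_le_of_le_one_right (hmu_nonneg i) (hc_le_one i)
  have hsum_nonneg : 0 ≤ ∑ i ∈ Finset.univ.filter (fun i : Fin d => p ≤ (i : ℕ)), μ i :=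
    Finset.sum_nonneg fun i _ => hmu_nonneg i
  -- the matrices G and X
  set G : Matrix (Fin d) (Fin p) ℝ := Eb - N * B⁻¹ with hG
  have hQEb : Q * Eb = Q * G := by
    rw [hG, Matrix.mul_sub, ← Matrix.mul_assoc, hQN, Matrix.zero_mul, sub_zero]
  set X : Matrix (Fin d) (Fin p) ℝ := Eb * B - N with hX
  have hGX : G = X * B⁻¹ := by
    rw [hG, hX, Matrix.sub_mul, Matrix.mul_assoc, Matrix.mul_nonsing_inv _ hBinv,
      Matrix.mul_one]
  have hXRN : X = -(R * N) := by
    rw [hX, hBN, hR, Matrix.sub_mul, Matrix.one_mul, neg_sub, Matrix.mul_assoc]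
  have hcol : ∀ (Z : Matrix (Fin d) (Fin d) ℝ) (Y : Matrix (Fin d) (Fin p) ℝ)
      (j : Fin p) (k : Fin d), (Z * Y) k j = Z.mulVec (fun l => Y l j) k := by
    intro Z Y j k
    simp [Matrix.mul_apply, Matrix.mulVec, dotProduct]
  -- part 1 bound
  have hceb : ∀ j : Fin p, c (Fin.castLE hpd j) = ∑ k, ((Q * G) k j) ^ 2 := by
    intro j
    have hvec : (fun k => E k (Fin.castLE hpd j)) = (fun k => Eb k j) := by
      funext k; rw [hEb]
    have h0 : c (Fin.castLE hpd j)
        = (fun k => Eb k j) ⬝ᵥ Q.mulVec (fun k => Eb k j) := by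
      rw [hc]; simp only [hvec]
    rw [h0, ← proj_quad_eq Q hQsym hQQ]
    refine Finset.sum_congr rfl fun k _ => ?_
    rw [← hcol Q Eb j k]
    rw [show (Q * Eb) k j = (Q * G) k j from congrFun (congrFun hQEb k) j]
  have hstep1 : ∑ i ∈ Finset.univ.filter (fun i : Fin d => ¬ p ≤ (i : ℕ)), μ i * c i
      ≤ ∑ j : Fin p, ∑ k, (G k j) ^ 2 := by
    rw [hset, Finset.sum_map]
    refine Finset.sum_le_sum fun j _ => ?_
    have hemb : (Fin.castLEEmb hpd) j = Fin.castLE hpd j := rfl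
    rw [hemb]
    calc μ (Fin.castLE hpd j) * c (Fin.castLE hpd j) ≤ c (Fin.castLE hpd j) := by
          refine mul_le_of_le_one_left ?_ (hmu_le_one _)
          rw [hceb]
          exact Finset.sum_nonneg fun k _ => sq_nonneg _
      _ = ∑ k, (Q.mulVec (fun l => G l j) k) ^ 2 := by
          rw [hceb]
          exact Finset.sum_congr rfl fun k _ => by rw [hcol Q G j k]
      _ ≤ ∑ k, (G k j) ^ 2 := proj_contract Q hQsym hQQ _
  have hstep3 : ∑ k, ∑ j, (G k j) ^ 2 ≤ opNormSq (B⁻¹)ᵀ * ∑ k, ∑ j, (X k j) ^ 2 := by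
    rw [hGX]
    exact frob_mul_le X B⁻¹
  have hXsq : ∀ k j, (X k j) ^ 2 = ((R * N) k j) ^ 2 := by
    intro k j
    rw [hXRN]
    simp [neg_sq]
  have htrRN : ∑ j : Fin p, ∑ k, ((R * N) k j) ^ 2 = Matrix.trace (R * (N * Nᵀ)) := by
    have hq : ∀ j : Fin p, ∑ k, ((R * N) k j) ^ 2
        = (fun l => N l j) ⬝ᵥ R.mulVec (fun l => N l j) := by
      intro j
      rw [← proj_quad_eq R hRsym hRR]
      exact Finset.sum_congr rfl fun k _ => by rw [hcol R N j k]
    simp only [hq]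
    simp only [Matrix.trace, Matrix.diag_apply, Matrix.mul_apply, dotProduct,
      Matrix.mulVec, Matrix.transpose_apply, Finset.mul_sum, Finset.sum_mul]
    rw [Finset.sum_comm]
    refine Finset.sum_congr rfl fun i _ => ?_
    rw [Finset.sum_comm]
    refine Finset.sum_congr rfl fun l _ => Finset.sum_congr rfl fun j _ => by ring
  have hstep7 : Matrix.trace (R * (N * Nᵀ)) ≤ Matrix.trace (R * A) := by
    have h := trace_proj_psd_nonneg R (A - N * Nᵀ) hRsym hRR hSpos
    rw [Matrix.mul_sub, Matrix.trace_sub] at h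
    linarith
  have htrRA : Matrix.trace (R * A)
      = ∑ i ∈ Finset.univ.filter (fun i : Fin d => p ≤ (i : ℕ)), μ i := by
    have h1 : Matrix.trace A = ∑ i, μ i := by
      rw [hdecomp, Matrix.trace_mul_comm, ← Matrix.mul_assoc, hEorth, Matrix.one_mul,
        Matrix.trace_diagonal]
    have h2 : Matrix.trace ((Eb * Ebᵀ) * A) = ∑ j : Fin p, μ (Fin.castLE hpd j) := by
      rw [Matrix.mul_assoc, Matrix.trace_mul_comm, Matrix.trace]
      refine Finset.sum_congr rfl fun j _ => ?_
      have hvec : (fun k => Eb k j) = (fun k => E k (Fin.castLE hpd j)) := by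
        funext k; rw [hEb]
      rw [Matrix.diag_apply, quad_entry A Eb j, hvec,
        hdiagA (Fin.castLE hpd j)]
    have h3 : ∑ j : Fin p, μ (Fin.castLE hpd j)
        = ∑ i ∈ Finset.univ.filter (fun i : Fin d => ¬ p ≤ (i : ℕ)), μ i := by
      rw [hset, Finset.sum_map]
      rfl
    have h4 := Finset.sum_filter_add_sum_filter_not Finset.univ
      (fun i : Fin d => p ≤ (i : ℕ)) μ
    rw [hR, Matrix.sub_mul, Matrix.one_mul, Matrix.trace_sub, h1, h2, h3]
    linarith
  have hpart1 : ∑ i ∈ Finset.univ.filter (fun i : Fin d => ¬ p ≤ (i : ℕ)), μ i * c i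
      ≤ opNormSq B⁻¹ * ∑ i ∈ Finset.univ.filter (fun i : Fin d => p ≤ (i : ℕ)), μ i := by
    have hXnonneg : 0 ≤ ∑ k, ∑ j, (X k j) ^ 2 :=
      Finset.sum_nonneg fun k _ => Finset.sum_nonneg fun j _ => sq_nonneg _
    have hXbound : ∑ k, ∑ j, (X k j) ^ 2
        ≤ ∑ i ∈ Finset.univ.filter (fun i : Fin d => p ≤ (i : ℕ)), μ i := by
      calc ∑ k, ∑ j, (X k j) ^ 2 = ∑ k, ∑ j, ((R * N) k j) ^ 2 := by
            exact Finset.sum_congr rfl fun k _ =>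
              Finset.sum_congr rfl fun j _ => hXsq k j
        _ = ∑ j : Fin p, ∑ k, ((R * N) k j) ^ 2 := Finset.sum_comm
        _ = Matrix.trace (R * (N * Nᵀ)) := htrRN
        _ ≤ Matrix.trace (R * A) := hstep7
        _ = ∑ i ∈ Finset.univ.filter (fun i : Fin d => p ≤ (i : ℕ)), μ i := htrRA
    calc ∑ i ∈ Finset.univ.filter (fun i : Fin d => ¬ p ≤ (i : ℕ)), μ i * c i
        ≤ ∑ j : Fin p, ∑ k, (G k j) ^ 2 := hstep1
      _ = ∑ k, ∑ j, (G k j) ^ 2 := Finset.sum_comm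
      _ ≤ opNormSq (B⁻¹)ᵀ * ∑ k, ∑ j, (X k j) ^ 2 := hstep3
      _ ≤ opNormSq B⁻¹ * ∑ k, ∑ j, (X k j) ^ 2 :=
          mul_le_mul_of_nonneg_right (opNormSq_transpose_le B⁻¹) hXnonneg
      _ ≤ opNormSq B⁻¹ * ∑ i ∈ Finset.univ.filter (fun i : Fin d => p ≤ (i : ℕ)), μ i :=
          mul_le_mul_of_nonneg_left hXbound (opNormSq_nonneg B⁻¹)
  -- final assembly
  rw [hTrace, ← hsplit]
  calc (∑ i ∈ Finset.univ.filter (fun i : Fin d => p ≤ (i : ℕ)), μ i * c i)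
        + ∑ i ∈ Finset.univ.filter (fun i : Fin d => ¬ p ≤ (i : ℕ)), μ i * c i
      ≤ (∑ i ∈ Finset.univ.filter (fun i : Fin d => p ≤ (i : ℕ)), μ i)
        + opNormSq B⁻¹ * ∑ i ∈ Finset.univ.filter (fun i : Fin d => p ≤ (i : ℕ)), μ i :=
        add_le_add hpart2 hpart1
    _ = (1 + opNormSq B⁻¹) *
        ∑ i ∈ Finset.univ.filter (fun i : Fin d => p ≤ (i : ℕ)), μ i := by ring
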